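/- arXiv:1309.4531 — 5 statements merged into one kernel-verified Lean document; each statement's English description precedes it below -/
import Mathlib

section
/- Let n ≥ 1, φ : Fin n → ℝ, y : Fin n → ℝ with y ⪰ 0, and suppose J(y) = Σᵢ yᵢ·u(φᵢ)u(φᵢ)ᵀ is invertible. Then trace(J(y)⁻¹) = 4·(𝟙ᵀy) / ((𝟙ᵀy)² − (cᵀy)² − (sᵀy)²), where cᵢ = cos(2φᵢ) and sᵢ = sin(2φᵢ). -/
theorem trace_inv_EFIM (n : ℕ) (hn : 1 ≤ n) (φ y : Fin n → ℝ) (hy : ∀ i, 0 ≤ y i)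
    (hJ : IsUnit (∑ i, y i • Matrix.vecMulVec ![Real.cos (φ i), Real.sin (φ i)]
        ![Real.cos (φ i), Real.sin (φ i)]).det) :
    ((∑ i, y i • Matrix.vecMulVec ![Real.cos (φ i), Real.sin (φ i)]
        ![Real.cos (φ i), Real.sin (φ i)])⁻¹).trace
      = 4 * (∑ i, y i) / ((∑ i, y i) ^ 2 - (∑ i, Real.cos (2 * φ i) * y i) ^ 2
          - (∑ i, Real.sin (2 * φ i) * y i) ^ 2) := by
  set J : Matrix (Fin 2) (Fin 2) ℝ := ∑ i, y i • Matrix.vecMulVec ![Real.cos (φ i), Real.sin (φ i)]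
        ![Real.cos (φ i), Real.sin (φ i)] with hJdef
  set A := ∑ i, y i * (Real.cos (φ i) * Real.cos (φ i)) with hA
  set B := ∑ i, y i * (Real.cos (φ i) * Real.sin (φ i)) with hB
  set C := ∑ i, y i * (Real.sin (φ i) * Real.sin (φ i)) with hC
  have hent : ∀ a b : Fin 2, J a b = ∑ i, y i *
      (![Real.cos (φ i), Real.sin (φ i)] a * ![Real.cos (φ i), Real.sin (φ i)] b) := by
    intro a b
    rw [hJdef]
    simp only [Matrix.sum_apply, Matrix.smul_apply, Matrix.vecMulVec_apply, smul_eq_mul]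
  have h00 : J 0 0 = A := hent 0 0
  have h01 : J 0 1 = B := hent 0 1
  have h10 : J 1 0 = B := by rw [hent 1 0]; simp [hB, mul_comm]
  have h11 : J 1 1 = C := hent 1 1
  have hdet : J.det = A * C - B * B := by
    rw [Matrix.det_fin_two, h00, h01, h10, h11]
  have hdne : A * C - B * B ≠ 0 := by
    rw [← hdet]; exact hJ.ne_zero
  have hS : (∑ i, y i) = A + C := by
    rw [hA, hC, ← Finset.sum_add_distrib]
    congr 1; ext i
    linear_combination (-(y i)) * Real.sin_sq_add_cos_sq (φ i)
  have hCsum : (∑ i, Real.cos (2 * φ i) * y i) = A - C := by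
    rw [hA, hC, ← Finset.sum_sub_distrib]
    congr 1; ext i
    rw [Real.cos_two_mul]
    linear_combination y i * Real.sin_sq_add_cos_sq (φ i)
  have hSsum : (∑ i, Real.sin (2 * φ i) * y i) = 2 * B := by
    rw [hB, Finset.mul_sum]
    congr 1; ext i
    rw [Real.sin_two_mul]; ring
  have htr : J⁻¹.trace = (A + C) / (A * C - B * B) := by
    rw [Matrix.inv_def, Matrix.trace]
    simp [Matrix.adjugate_fin_two, Matrix.diag, h00, h11, hdet,
      Ring.inverse_eq_inv]
    field_simp
    ring
  rw [htr, hS, hCsum, hSsum]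
  have h4 : (A + C) ^ 2 - (A - C) ^ 2 - (2 * B) ^ 2 = 4 * (A * C - B * B) := by ring
  rw [div_eq_div_iff hdne (by rw [h4]; exact mul_ne_zero (by norm_num) hdne)]
  ring
end

section
/- Let y ⪰ 0 in ℝⁿ and angles φⱼ with uncertainty intervals [φ̂ⱼ − φ̃ⱼ, φ̂ⱼ + φ̃ⱼ]. Define S(y) = max over admissible φ of ‖Σⱼ yⱼ·u(2φⱼ)‖. Then S(y) = max over ϑ ∈ [0, 2π) of Σⱼ yⱼ · max_{|ε|≤2φ̃ⱼ} cos(2φ̂ⱼ + ε − ϑ). -/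
open Real Set

set_option maxHeartbeats 1000000

private lemma proj_le_norm (a b C S : ℝ) (h : a ^ 2 + b ^ 2 = 1) :
    a * C + b * S ≤ Real.sqrt (C ^ 2 + S ^ 2) := by
  have h3 : (a * C + b * S) ^ 2 ≤ C ^ 2 + S ^ 2 := by
    nlinarith [sq_nonneg (a * S - b * C)]
  calc a * C + b * S ≤ |a * C + b * S| := le_abs_self _
    _ = Real.sqrt ((a * C + b * S) ^ 2) := (Real.sqrt_sq_eq_abs _).symm
    _ ≤ Real.sqrt (C ^ 2 + S ^ 2) := Real.sqrt_le_sqrt h3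

theorem worst_norm_eq_sup_proj (n : ℕ) (hn : 1 ≤ n) (y hphi tphi : Fin n → ℝ)
    (hy : ∀ j, 0 ≤ y j) (ht : ∀ j, 0 ≤ tphi j) :
    sSup {r : ℝ | ∃ φ : Fin n → ℝ, (∀ j, |φ j - hphi j| ≤ tphi j) ∧
        r = Real.sqrt ((∑ j, y j * Real.cos (2 * φ j)) ^ 2
              + (∑ j, y j * Real.sin (2 * φ j)) ^ 2)}
      = sSup {r : ℝ | ∃ ϑ ∈ Set.Ico (0 : ℝ) (2 * Real.pi),
          r = ∑ j, y j *
            sSup ((fun ε => Real.cos (2 * hphi j + ε - ϑ)) ''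
              Set.Icc (-(2 * tphi j)) (2 * tphi j))} := by
  set A := {r : ℝ | ∃ φ : Fin n → ℝ, (∀ j, |φ j - hphi j| ≤ tphi j) ∧
        r = Real.sqrt ((∑ j, y j * Real.cos (2 * φ j)) ^ 2
              + (∑ j, y j * Real.sin (2 * φ j)) ^ 2)} with hA
  set B := {r : ℝ | ∃ ϑ ∈ Set.Ico (0 : ℝ) (2 * Real.pi),
          r = ∑ j, y j *
            sSup ((fun ε => Real.cos (2 * hphi j + ε - ϑ)) ''
              Set.Icc (-(2 * tphi j)) (2 * tphi j))} with hB
  set g : ℝ → Fin n → ℝ := fun ϑ j =>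
    sSup ((fun ε => Real.cos (2 * hphi j + ε - ϑ)) ''
      Set.Icc (-(2 * tphi j)) (2 * tphi j)) with hg
  -- basic facts about the image sets
  have hIccne : ∀ j, (Set.Icc (-(2 * tphi j)) (2 * tphi j)).Nonempty :=
    fun j => Set.nonempty_Icc.2 (by nlinarith [ht j])
  have hKcomp : ∀ ϑ j, IsCompact ((fun ε => Real.cos (2 * hphi j + ε - ϑ)) ''
      Set.Icc (-(2 * tphi j)) (2 * tphi j)) := by
    intro ϑ j
    exact isCompact_Icc.image (by continuity)
  have hattain : ∀ ϑ j, ∃ ε ∈ Set.Icc (-(2 * tphi j)) (2 * tphi j),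
      Real.cos (2 * hphi j + ε - ϑ) = g ϑ j := by
    intro ϑ j
    have := (hKcomp ϑ j).sSup_mem ((hIccne j).image _)
    obtain ⟨ε, hε, hval⟩ := this
    exact ⟨ε, hε, hval⟩
  have hgle1 : ∀ ϑ j, g ϑ j ≤ 1 := by
    intro ϑ j
    apply csSup_le ((hIccne j).image _)
    rintro _ ⟨ε, -, rfl⟩
    exact Real.cos_le_one _
  have hgge : ∀ ϑ j, ∀ ε ∈ Set.Icc (-(2 * tphi j)) (2 * tphi j),
      Real.cos (2 * hphi j + ε - ϑ) ≤ g ϑ j := by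
    intro ϑ j ε hε
    exact le_csSup (hKcomp ϑ j).bddAbove (Set.mem_image_of_mem _ hε)
  have hAne : A.Nonempty := by
    refine ⟨_, hphi, fun j => by simpa using ht j, rfl⟩
  have hBne : B.Nonempty := by
    refine ⟨_, 0, ⟨le_refl _, by positivity⟩, rfl⟩
  have habsC : ∀ φ : Fin n → ℝ, |∑ j, y j * Real.cos (2 * φ j)| ≤ ∑ j, y j := by
    intro φ
    refine (Finset.abs_sum_le_sum_abs _ _).trans (Finset.sum_le_sum fun j _ => ?_)
    rw [abs_mul, abs_of_nonneg (hy j)]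
    nlinarith [abs_cos_le_one (2 * φ j), hy j, abs_nonneg (Real.cos (2 * φ j))]
  have habsS : ∀ φ : Fin n → ℝ, |∑ j, y j * Real.sin (2 * φ j)| ≤ ∑ j, y j := by
    intro φ
    refine (Finset.abs_sum_le_sum_abs _ _).trans (Finset.sum_le_sum fun j _ => ?_)
    rw [abs_mul, abs_of_nonneg (hy j)]
    nlinarith [abs_sin_le_one (2 * φ j), hy j, abs_nonneg (Real.sin (2 * φ j))]
  have hAbdd : BddAbove A := by
    refine ⟨Real.sqrt ((∑ j, y j) ^ 2 + (∑ j, y j) ^ 2), ?_⟩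
    rintro r ⟨φ, hφ, rfl⟩
    apply Real.sqrt_le_sqrt
    have h1 := habsC φ
    have h2 := habsS φ
    have e1 : (∑ j, y j * Real.cos (2 * φ j)) ^ 2 ≤ (∑ j, y j) ^ 2 := by
      nlinarith [abs_nonneg (∑ j, y j * Real.cos (2 * φ j)),
        sq_abs (∑ j, y j * Real.cos (2 * φ j))]
    have e2 : (∑ j, y j * Real.sin (2 * φ j)) ^ 2 ≤ (∑ j, y j) ^ 2 := by
      nlinarith [abs_nonneg (∑ j, y j * Real.sin (2 * φ j)),
        sq_abs (∑ j, y j * Real.sin (2 * φ j))]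
    linarith
  have hBbdd : BddAbove B := by
    refine ⟨∑ j, y j, ?_⟩
    rintro r ⟨ϑ, hϑ, rfl⟩
    refine Finset.sum_le_sum fun j _ => ?_
    have := hgle1 ϑ j
    nlinarith [hy j]
  apply le_antisymm
  · -- sSup A ≤ sSup B
    apply csSup_le hAne
    rintro r ⟨φ, hφ, rfl⟩
    set C := ∑ j, y j * Real.cos (2 * φ j) with hC
    set S := ∑ j, y j * Real.sin (2 * φ j) with hS
    -- find direction ϑ
    have key : ∃ ϑ ∈ Set.Ico (0 : ℝ) (2 * Real.pi),
        Real.sqrt (C ^ 2 + S ^ 2) ≤ Real.cos ϑ * C + Real.sin ϑ * S := by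
      by_cases hz : C = 0 ∧ S = 0
      · refine ⟨0, ⟨le_refl _, by positivity⟩, ?_⟩
        rw [hz.1, hz.2]
        simp
      · set z : ℂ := ⟨C, S⟩ with hzdef
        have hz0 : z ≠ 0 := by
          intro h
          apply hz
          constructor
          · have := congrArg Complex.re h; simpa [hzdef] using this
          · have := congrArg Complex.im h; simpa [hzdef] using this
        set θ := Complex.arg z with hθ
        have hcos : Real.cos θ = C / ‖z‖ := by
          simpa [hzdef] using Complex.cos_arg hz0
        have hsin : Real.sin θ = S / ‖z‖ := by
          simpa [hzdef] using Complex.sin_arg z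
        have habs : ‖z‖ = Real.sqrt (C ^ 2 + S ^ 2) := by
          rw [Complex.norm_def, Complex.normSq_mk]
          ring_nf
        have habspos : 0 < ‖z‖ := by
          simpa [norm_pos_iff] using hz0
        have heq : Real.cos θ * C + Real.sin θ * S = Real.sqrt (C ^ 2 + S ^ 2) := by
          have hRpos : 0 < Real.sqrt (C ^ 2 + S ^ 2) := habs ▸ habspos
          have hsq : Real.sqrt (C ^ 2 + S ^ 2) * Real.sqrt (C ^ 2 + S ^ 2)
              = C ^ 2 + S ^ 2 := Real.mul_self_sqrt (by positivity)
          rw [hcos, hsin, habs]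
          field_simp
          nlinarith [hsq]
        have hrange := Complex.arg_mem_Ioc z
        rcases le_or_gt 0 θ with h0 | h0
        · exact ⟨θ, ⟨h0, lt_of_le_of_lt hrange.2 (by nlinarith [Real.pi_pos])⟩, heq.ge⟩
        · refine ⟨θ + 2 * Real.pi, ⟨by nlinarith [hrange.1, Real.pi_pos],
            by nlinarith [hrange.2]⟩, ?_⟩
          rw [Real.cos_add_two_pi, Real.sin_add_two_pi]
          exact heq.ge
    obtain ⟨ϑ, hϑmem, hϑ⟩ := key
    have hle : Real.cos ϑ * C + Real.sin ϑ * S ≤ ∑ j, y j * g ϑ j := by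
      have expand : Real.cos ϑ * C + Real.sin ϑ * S
          = ∑ j, y j * Real.cos (2 * φ j - ϑ) := by
        rw [hC, hS, Finset.mul_sum, Finset.mul_sum, ← Finset.sum_add_distrib]
        refine Finset.sum_congr rfl fun j _ => ?_
        rw [Real.cos_sub]
        ring
      rw [expand]
      refine Finset.sum_le_sum fun j _ => ?_
      have hεmem : (2 * φ j - 2 * hphi j) ∈ Set.Icc (-(2 * tphi j)) (2 * tphi j) := by
        rw [Set.mem_Icc]
        have := hφ j
        rw [abs_le] at this
        constructor <;> linarith [this.1, this.2]
      have := hgge ϑ j _ hεmem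
      have harg : 2 * hphi j + (2 * φ j - 2 * hphi j) - ϑ = 2 * φ j - ϑ := by ring
      rw [harg] at this
      nlinarith [hy j]
    refine le_trans (hϑ.trans hle) (le_csSup hBbdd ?_)
    exact ⟨ϑ, hϑmem, rfl⟩
  · -- sSup B ≤ sSup A
    apply csSup_le hBne
    rintro r ⟨ϑ, hϑ, rfl⟩
    choose ε hεmem hεval using fun j => hattain ϑ j
    set φ : Fin n → ℝ := fun j => hphi j + ε j / 2 with hφdef
    have hφok : ∀ j, |φ j - hphi j| ≤ tphi j := by
      intro j
      have := hεmem j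
      rw [Set.mem_Icc] at this
      rw [hφdef]
      simp only
      rw [abs_le]
      constructor <;> · simp only [add_sub_cancel_left]; linarith [this.1, this.2]
    set C := ∑ j, y j * Real.cos (2 * φ j) with hC
    set S := ∑ j, y j * Real.sin (2 * φ j) with hS
    have heq : (∑ j, y j * g ϑ j) = Real.cos ϑ * C + Real.sin ϑ * S := by
      rw [hC, hS, Finset.mul_sum, Finset.mul_sum, ← Finset.sum_add_distrib]
      refine Finset.sum_congr rfl fun j _ => ?_
      rw [← hεval j]
      have harg : 2 * hphi j + ε j - ϑ = 2 * φ j - ϑ := by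
        rw [hφdef]; ring
      rw [harg, Real.cos_sub]
      ring
    have hle : (∑ j, y j * g ϑ j) ≤ Real.sqrt (C ^ 2 + S ^ 2) := by
      rw [heq]
      exact proj_le_norm _ _ _ _ (by
        have := Real.sin_sq_add_cos_sq ϑ; nlinarith)
    exact le_trans hle (le_csSup hAbdd ⟨φ, hφok, rfl⟩)
end

section
/- (Finite projection lower bound) With S(y) as above and ϑₘ = (2m+1)π/M for m = 0,…,M−1, define h_m ∈ ℝⁿ by (h_m)ⱼ = max_{|ε|≤2φ̃ⱼ} cos(2φ̂ⱼ − ϑₘ + ε). Then for all y ⪰ 0, max_m h_mᵀy ≤ S(y). -/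
theorem finite_projection_lower_bound (n M : ℕ) (hn : 1 ≤ n) (hM : 0 < M)
    (y hphi tphi : Fin n → ℝ) (hy : ∀ j, 0 ≤ y j) (ht : ∀ j, 0 ≤ tphi j) :
    ∀ m : Fin M,
      (∑ j, (sSup ((fun ε => Real.cos (2 * hphi j - (2 * (m : ℝ) + 1) * Real.pi / M + ε)) ''
          Set.Icc (-(2 * tphi j)) (2 * tphi j))) * y j)
        ≤ sSup {r : ℝ | ∃ φ : Fin n → ℝ, (∀ j, |φ j - hphi j| ≤ tphi j) ∧
            r = Real.sqrt ((∑ j, y j * Real.cos (2 * φ j)) ^ 2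
                  + (∑ j, y j * Real.sin (2 * φ j)) ^ 2)} := by
  intro m
  set θ : ℝ := (2 * (m : ℝ) + 1) * Real.pi / M with hθ
  -- choose maximizing ε for each j
  have hchoice : ∀ j : Fin n, ∃ ε ∈ Set.Icc (-(2 * tphi j)) (2 * tphi j),
      Real.cos (2 * hphi j - θ + ε) =
        sSup ((fun ε => Real.cos (2 * hphi j - θ + ε)) ''
          Set.Icc (-(2 * tphi j)) (2 * tphi j)) := by
    intro j
    have hne : (Set.Icc (-(2 * tphi j)) (2 * tphi j)).Nonempty := by
      refine ⟨0, ?_, ?_⟩ <;> simp <;> nlinarith [ht j]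
    have hc : IsCompact ((fun ε => Real.cos (2 * hphi j - θ + ε)) ''
        Set.Icc (-(2 * tphi j)) (2 * tphi j)) :=
      isCompact_Icc.image (by continuity)
    have hmem := hc.sSup_mem (hne.image _)
    obtain ⟨ε, hε, hεeq⟩ := hmem
    exact ⟨ε, hε, hεeq⟩
  choose ε hεmem hεeq using hchoice
  set φ : Fin n → ℝ := fun j => hphi j + ε j / 2 with hφ
  set A : ℝ := ∑ j, y j * Real.cos (2 * φ j) with hA
  set B : ℝ := ∑ j, y j * Real.sin (2 * φ j) with hB
  have key : (∑ j, (sSup ((fun ε => Real.cos (2 * hphi j - θ + ε)) ''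
      Set.Icc (-(2 * tphi j)) (2 * tphi j))) * y j) = Real.cos θ * A + Real.sin θ * B := by
    rw [hA, hB, Finset.mul_sum, Finset.mul_sum, ← Finset.sum_add_distrib]
    apply Finset.sum_congr rfl
    intro j _
    rw [← hεeq j]
    have h2 : 2 * hphi j - θ + ε j = 2 * φ j - θ := by rw [hφ]; ring
    rw [h2, Real.cos_sub]
    ring
  rw [key]
  have hstep : Real.cos θ * A + Real.sin θ * B ≤ Real.sqrt (A ^ 2 + B ^ 2) := by
    have hs : 0 ≤ Real.sqrt (A ^ 2 + B ^ 2) := Real.sqrt_nonneg _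
    have hs2 : Real.sqrt (A ^ 2 + B ^ 2) ^ 2 = A ^ 2 + B ^ 2 :=
      Real.sq_sqrt (by positivity)
    have htrig : Real.cos θ ^ 2 + Real.sin θ ^ 2 = 1 := Real.cos_sq_add_sin_sq θ
    nlinarith [sq_nonneg (Real.sin θ * A - Real.cos θ * B),
      sq_nonneg (Real.sqrt (A ^ 2 + B ^ 2) - (Real.cos θ * A + Real.sin θ * B)),
      sq_nonneg (Real.sqrt (A ^ 2 + B ^ 2) + (Real.cos θ * A + Real.sin θ * B))]
  refine hstep.trans (le_csSup ?_ ?_)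
  · -- bounded above
    set C : ℝ := ∑ j, y j with hC
    refine ⟨Real.sqrt (C ^ 2 + C ^ 2), ?_⟩
    rintro r ⟨ψ, -, rfl⟩
    apply Real.sqrt_le_sqrt
    have hb : ∀ (f : Fin n → ℝ), (∀ j, |f j| ≤ 1) →
        (∑ j, y j * f j) ^ 2 ≤ C ^ 2 := by
      intro f hf
      have habs : |∑ j, y j * f j| ≤ C := by
        calc |∑ j, y j * f j| ≤ ∑ j, |y j * f j| := Finset.abs_sum_le_sum_abs _ _
        _ ≤ ∑ j, y j := by
            apply Finset.sum_le_sum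
            intro j _
            rw [abs_mul, abs_of_nonneg (hy j)]
            calc y j * |f j| ≤ y j * 1 := by
                  exact mul_le_mul_of_nonneg_left (hf j) (hy j)
              _ = y j := mul_one _
        _ = C := rfl
      exact sq_le_sq' (neg_le_of_abs_le habs |>.trans_eq' rfl |> fun h => by
        have := abs_le.mp habs; linarith) (abs_le.mp habs).2 |>.trans_eq rfl
    have h1 := hb (fun j => Real.cos (2 * ψ j)) (fun j => Real.abs_cos_le_one _)
    have h2 := hb (fun j => Real.sin (2 * ψ j)) (fun j => Real.abs_sin_le_one _)
    linarith
  · -- membership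
    refine ⟨φ, ?_, rfl⟩
    intro j
    have h := hεmem j
    rw [Set.mem_Icc] at h
    rw [hφ]
    rw [show hphi j + ε j / 2 - hphi j = ε j / 2 by ring, abs_le]
    constructor <;> [linarith [h.1]; linarith [h.2]]
end

section
/- (Finite projection upper bound) With the same setup, define g_m = h_m / cos(π/M) for M ≥ 3. Then for all y ⪰ 0, S(y) ≤ max_m g_mᵀy. -/
lemma keyA (M : ℕ) (hM : 3 ≤ M) (A B : ℝ) :
    ∃ m : Fin M, Real.sqrt (A ^ 2 + B ^ 2) * Real.cos (Real.pi / M) ≤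
      A * Real.cos ((2 * (m : ℝ) + 1) * Real.pi / M)
        + B * Real.sin ((2 * (m : ℝ) + 1) * Real.pi / M) := by
  have hMpos : (0 : ℝ) < M := by positivity
  have hpi := Real.pi_pos
  set z : ℂ := A + B * Complex.I with hz
  set θ := z.arg with hθdef
  have hR : ‖z‖ = Real.sqrt (A ^ 2 + B ^ 2) := by
    rw [Complex.norm_def, Complex.normSq_add_mul_I]
  have hM3 : (3 : ℝ) ≤ M := by exact_mod_cast hM
  have hA : ‖z‖ * Real.cos θ = A := by
    have h := Complex.norm_mul_cos_arg z
    rwa [show z.re = A by simp [hz]] at h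
  have hB : ‖z‖ * Real.sin θ = B := by
    have h := Complex.norm_mul_sin_arg z
    rwa [show z.im = B by simp [hz]] at h
  have hθmem : θ ∈ Set.Ioc (-Real.pi) Real.pi := Complex.arg_mem_Ioc z
  set θ' : ℝ := if θ < 0 then θ + 2 * Real.pi else θ with hθ'
  have hcase : θ' = θ + 2 * Real.pi ∨ θ' = θ := by
    by_cases hc : θ < 0
    · left; simp [hθ', if_pos hc]
    · right; simp [hθ', if_neg hc]
  have hθ'nn : 0 ≤ θ' := by
    rcases hθmem with ⟨h1, h2⟩
    by_cases hc : θ < 0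
    · simp only [hθ', if_pos hc]; nlinarith
    · simp only [hθ', if_neg hc]; linarith
  have hθ'lt : θ' < 2 * Real.pi := by
    rcases hθmem with ⟨h1, h2⟩
    by_cases hc : θ < 0
    · simp only [hθ', if_pos hc]; nlinarith
    · simp only [hθ', if_neg hc]; nlinarith
  set k : ℤ := ⌊θ' * M / (2 * Real.pi)⌋ with hk
  have hknn : 0 ≤ k := Int.le_floor.mpr (by push_cast; positivity)
  have hklt : k < M := by
    apply Int.floor_lt.mpr
    push_cast
    rw [div_lt_iff₀ (by positivity)]
    nlinarith
  refine ⟨⟨k.toNat, by omega⟩, ?_⟩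
  have hmcast : (((⟨k.toNat, by omega⟩ : Fin M) : ℕ) : ℝ) = (k : ℝ) := by
    simp only [Fin.val_mk]
    exact_mod_cast Int.toNat_of_nonneg hknn
  rw [hmcast]
  set ϑ : ℝ := (2 * (k : ℝ) + 1) * Real.pi / M with hϑ
  have h1 : (k : ℝ) * (2 * Real.pi) ≤ θ' * M :=
    (le_div_iff₀ (by positivity)).mp (Int.floor_le (θ' * M / (2 * Real.pi)))
  have h2 : θ' * M < ((k : ℝ) + 1) * (2 * Real.pi) := by
    have := Int.lt_floor_add_one (θ' * M / (2 * Real.pi))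
    rw [div_lt_iff₀ (by positivity)] at this
    push_cast at this ⊢
    linarith
  have hϑM : ϑ * M = (2 * (k : ℝ) + 1) * Real.pi := by
    rw [hϑ]; field_simp
  have hπM : (Real.pi / M) * M = Real.pi := by field_simp
  have hlow : -(Real.pi / M) ≤ θ' - ϑ := by nlinarith
  have hhigh : θ' - ϑ ≤ Real.pi / M := by nlinarith
  have habs : |θ' - ϑ| ≤ Real.pi / M := abs_le.mpr ⟨hlow, hhigh⟩
  have hcos1 : Real.cos (Real.pi / M) ≤ Real.cos (θ' - ϑ) := by
    rw [← Real.cos_abs (θ' - ϑ)]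
    refine Real.cos_le_cos_of_nonneg_of_le_pi (abs_nonneg _) ?_ habs
    rw [div_le_iff₀ hMpos]
    nlinarith
  have hcosθ : Real.cos (θ - ϑ) = Real.cos (θ' - ϑ) := by
    rcases hcase with h | h
    · rw [h, show θ + 2 * Real.pi - ϑ = θ - ϑ + 2 * Real.pi by ring, Real.cos_add_two_pi]
    · rw [h]
  calc Real.sqrt (A ^ 2 + B ^ 2) * Real.cos (Real.pi / M)
      ≤ Real.sqrt (A ^ 2 + B ^ 2) * Real.cos (θ' - ϑ) := by
        exact mul_le_mul_of_nonneg_left hcos1 (Real.sqrt_nonneg _)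
    _ = ‖z‖ * Real.cos (θ - ϑ) := by rw [hR, hcosθ]
    _ = A * Real.cos ϑ + B * Real.sin ϑ := by
        rw [Real.cos_sub, ← hA, ← hB]; ring

theorem finite_projection_upper_bound (n M : ℕ) (hn : 1 ≤ n) (hM : 3 ≤ M)
    (y hphi tphi : Fin n → ℝ) (hy : ∀ j, 0 ≤ y j) (ht : ∀ j, 0 ≤ tphi j) :
    ∃ m : Fin M,
      sSup {r : ℝ | ∃ φ : Fin n → ℝ, (∀ j, |φ j - hphi j| ≤ tphi j) ∧
          r = Real.sqrt ((∑ j, y j * Real.cos (2 * φ j)) ^ 2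
                + (∑ j, y j * Real.sin (2 * φ j)) ^ 2)}
        ≤ (∑ j, ((sSup ((fun ε => Real.cos (2 * hphi j - (2 * (m : ℝ) + 1) * Real.pi / M + ε)) ''
            Set.Icc (-(2 * tphi j)) (2 * tphi j))) / Real.cos (Real.pi / M)) * y j) := by
  have hMpos : (0 : ℝ) < M := by positivity
  have hM3 : (3 : ℝ) ≤ M := by exact_mod_cast hM
  have hpi := Real.pi_pos
  have hcosM : 0 < Real.cos (Real.pi / M) := by
    apply Real.cos_pos_of_mem_Ioo
    constructor
    · have : 0 < Real.pi / M := by positivity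
      linarith
    · rw [div_lt_div_iff₀ hMpos (by norm_num : (0:ℝ) < 2)]
      nlinarith
  -- the coefficients
  set c : Fin M → Fin n → ℝ := fun m j =>
    sSup ((fun ε => Real.cos (2 * hphi j - (2 * (m : ℝ) + 1) * Real.pi / M + ε)) ''
      Set.Icc (-(2 * tphi j)) (2 * tphi j)) with hc
  set F : Fin M → ℝ := fun m => ∑ j, (c m j / Real.cos (Real.pi / M)) * y j with hF
  obtain ⟨mstar, -, hmax⟩ := Finset.exists_max_image Finset.univ F
    ⟨⟨0, by omega⟩, Finset.mem_univ _⟩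
  refine ⟨mstar, ?_⟩
  have hbound : ∀ φ : Fin n → ℝ, (∀ j, |φ j - hphi j| ≤ tphi j) →
      Real.sqrt ((∑ j, y j * Real.cos (2 * φ j)) ^ 2
        + (∑ j, y j * Real.sin (2 * φ j)) ^ 2) ≤ F mstar := by
    intro φ hφ
    set A := ∑ j, y j * Real.cos (2 * φ j) with hAdef
    set B := ∑ j, y j * Real.sin (2 * φ j) with hBdef
    obtain ⟨m, hm⟩ := keyA M hM A B
    set ϑ : ℝ := (2 * (m : ℝ) + 1) * Real.pi / M with hϑ
    have hterm : ∀ j, y j * Real.cos (2 * φ j - ϑ) ≤ y j * c m j := by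
      intro j
      refine mul_le_mul_of_nonneg_left ?_ (hy j)
      have hbdd : BddAbove ((fun ε => Real.cos (2 * hphi j - ϑ + ε)) ''
          Set.Icc (-(2 * tphi j)) (2 * tphi j)) := by
        refine ⟨1, fun x hx => ?_⟩
        obtain ⟨ε, -, rfl⟩ := hx
        exact Real.cos_le_one _
      have hmem : Real.cos (2 * φ j - ϑ) ∈ ((fun ε => Real.cos (2 * hphi j - ϑ + ε)) ''
          Set.Icc (-(2 * tphi j)) (2 * tphi j)) := by
        refine ⟨2 * (φ j - hphi j), ?_, ?_⟩
        · have := abs_le.mp (hφ j)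
          constructor <;> nlinarith [this.1, this.2]
        · ring_nf
      exact le_csSup hbdd hmem
    have hsum : A * Real.cos ϑ + B * Real.sin ϑ = ∑ j, y j * Real.cos (2 * φ j - ϑ) := by
      rw [hAdef, hBdef, Finset.sum_mul, Finset.sum_mul, ← Finset.sum_add_distrib]
      refine Finset.sum_congr rfl fun j _ => ?_
      rw [Real.cos_sub]
      ring
    have step : Real.sqrt (A ^ 2 + B ^ 2) * Real.cos (Real.pi / M)
        ≤ F m * Real.cos (Real.pi / M) := by
      calc Real.sqrt (A ^ 2 + B ^ 2) * Real.cos (Real.pi / M)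
          ≤ A * Real.cos ϑ + B * Real.sin ϑ := hm
        _ = ∑ j, y j * Real.cos (2 * φ j - ϑ) := hsum
        _ ≤ ∑ j, y j * c m j := Finset.sum_le_sum fun j _ => hterm j
        _ = F m * Real.cos (Real.pi / M) := by
            rw [hF, Finset.sum_mul]
            refine Finset.sum_congr rfl fun j _ => ?_
            field_simp
    have hFm : Real.sqrt (A ^ 2 + B ^ 2) ≤ F m :=
      le_of_mul_le_mul_right step hcosM
    exact hFm.trans (hmax m (Finset.mem_univ m))
  have hF0 : 0 ≤ F mstar := by
    refine le_trans (Real.sqrt_nonneg _) (hbound hphi fun j => ?_)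
    simpa using ht j
  refine Real.sSup_le ?_ hF0
  rintro r ⟨φ, hφ, rfl⟩
  exact hbound φ hφ
end

section
/- Let T, G, H, D > 0 satisfy H = cos(π/M)·G, H² ≤ T²·(1 − 1/B), G < T, where B = T²/(T² − S²) ≥ 1 for some 0 ≤ S < T with H ≤ S ≤ G. Then 4T/(T² − G²) ≤ (1 + C_M)·4T/(T² − H²), where C_M = sin²(π/M)·(B − 1)/(1 − sin²(π/M)·B) and M ≥ π√B. -/
set_option maxHeartbeats 1600000 in
theorem speb_gap_bound (T G H S B : ℝ) (M : ℕ)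
    (hT : 0 < T) (hG : 0 < G) (hH : 0 < H)
    (hHG : H = Real.cos (Real.pi / M) * G)
    (hH2 : H ^ 2 ≤ T ^ 2 * (1 - 1 / B))
    (hGT : G < T)
    (hS0 : 0 ≤ S) (hST : S < T)
    (hB : B = T ^ 2 / (T ^ 2 - S ^ 2))
    (hHS : H ≤ S) (hSG : S ≤ G)
    (hM : Real.pi * Real.sqrt B ≤ M) :
    4 * T / (T ^ 2 - G ^ 2)
      ≤ (1 + Real.sin (Real.pi / M) ^ 2 * (B - 1) / (1 - Real.sin (Real.pi / M) ^ 2 * B))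
          * (4 * T / (T ^ 2 - H ^ 2)) := by
  set s := Real.sin (Real.pi / M) with hs
  set c := Real.cos (Real.pi / M) with hc
  clear_value s c
  have hTS : S ^ 2 < T ^ 2 := by nlinarith
  have hB1 : 1 ≤ B := by
    rw [hB]; rw [le_div_iff₀ (by linarith)]; nlinarith
  have hBpos : 0 < B := by linarith
  have hsqB : Real.sqrt B ≥ 1 := by
    rw [show (1:ℝ) = Real.sqrt 1 by simp]
    exact Real.sqrt_le_sqrt hB1
  have hMpos : (0:ℝ) < M := by
    have := Real.pi_pos
    nlinarith
  have hMpos' : 0 < M := by exact_mod_cast hMpos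
  have hangle_pos : 0 < Real.pi / M := div_pos Real.pi_pos hMpos
  have hangle_lt : Real.pi / M < Real.pi := by
    have h3 : (3:ℝ) < M := by nlinarith [Real.pi_gt_three]
    have h3' : 3 < M := by exact_mod_cast h3
    have hM4 : (4:ℝ) ≤ M := by exact_mod_cast h3'
    rw [div_lt_iff₀ hMpos]
    nlinarith [Real.pi_pos]
  have hspos : 0 < s := by rw [hs]; exact Real.sin_pos_of_pos_of_lt_pi hangle_pos hangle_lt
  have hslt : s < Real.pi / M := by rw [hs]; exact Real.sin_lt hangle_pos
  have hsqBpos : (0:ℝ) < Real.sqrt B := by linarith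
  have hle : Real.pi / M ≤ 1 / Real.sqrt B := by
    rw [div_le_div_iff₀ hMpos hsqBpos]
    nlinarith
  have hsqB2 : Real.sqrt B ^ 2 = B := Real.sq_sqrt (le_of_lt hBpos)
  have hsB : s ^ 2 * B < 1 := by
    have h1 : s < 1 / Real.sqrt B := lt_of_lt_of_le hslt hle
    have h2 : s * Real.sqrt B < 1 := by
      rw [div_eq_inv_mul, lt_inv_mul_iff₀ hsqBpos] at h1
      linarith [h1]
    have h3 : s ^ 2 * B = (s * Real.sqrt B) ^ 2 := by rw [mul_pow, hsqB2]
    rw [h3]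
    calc (s * Real.sqrt B) ^ 2 < 1 ^ 2 :=
          pow_lt_pow_left₀ h2 (mul_nonneg hspos.le hsqBpos.le) two_ne_zero
      _ = 1 := one_pow 2
  have hdenG : 0 < T ^ 2 - G ^ 2 := by nlinarith
  have hdenH : 0 < T ^ 2 - H ^ 2 := by nlinarith
  have hden : 0 < 1 - s ^ 2 * B := by linarith
  have hkey : T ^ 2 ≤ B * (T ^ 2 - H ^ 2) := by
    have h := mul_le_mul_of_nonneg_left hH2 (le_of_lt hBpos)
    have heq : B * (T ^ 2 * (1 - 1 / B)) = B * T ^ 2 - T ^ 2 := by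
      field_simp
    rw [heq] at h
    linarith
  have hsc : s ^ 2 + c ^ 2 = 1 := by rw [hs, hc]; exact Real.sin_sq_add_cos_sq _
  have hfac : 1 + s ^ 2 * (B - 1) / (1 - s ^ 2 * B) = c ^ 2 / (1 - s ^ 2 * B) := by
    field_simp
    nlinarith
  rw [hfac, div_mul_div_comm, div_le_div_iff₀ hdenG (by positivity)]
  have hH2c : H ^ 2 = c ^ 2 * G ^ 2 := by rw [hHG]; ring
  have hineq : (1 - s ^ 2 * B) * (T ^ 2 - H ^ 2) ≤ c ^ 2 * (T ^ 2 - G ^ 2) := by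
    nlinarith [mul_le_mul_of_nonneg_left hkey (sq_nonneg s)]
  nlinarith [mul_le_mul_of_nonneg_left hineq (by positivity : (0:ℝ) ≤ 4 * T)]
end
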